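/- (Confluent Christoffel–Darboux formula.) Suppose p_0, p_1, p_2, … are real polynomials and (a_j)_{j≥1}, (b_j)_{j≥1}, (c_j)_{j≥2} are reals with a_j ≠ 0 for all j ≥ 1, satisfying p_1 = (a_1 X + b_1)·p_0 and, for every j ≥ 2, p_j = (a_j X + b_j)·p_{j−1} − c_j·p_{j−2} with c_j = a_j / a_{j−1}. Then for every n ≥ 1 and every real x: Σ_{i=0}^{n−1} p_i(x)² = (p_n'(x)·p_{n−1}(x) − p_{n−1}'(x)·p_n(x)) / a_n, where p' denotes the formal derivative of the polynomial p. -/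
import Mathlib


/-- Confluent Christoffel–Darboux formula, from the three-term recurrence
alone. -/
theorem stmt_8 (p : ℕ → Polynomial ℝ) (a b c : ℕ → ℝ)
    (ha : ∀ j, 1 ≤ j → a j ≠ 0)
    (h1 : p 1 = (Polynomial.C (a 1) * Polynomial.X + Polynomial.C (b 1)) * p 0)
    (hrec : ∀ j, 2 ≤ j →
      p j = (Polynomial.C (a j) * Polynomial.X + Polynomial.C (b j)) * p (j - 1) -
        Polynomial.C (c j) * p (j - 2))
    (hc : ∀ j, 2 ≤ j → c j = a j / a (j - 1))
    (n : ℕ) (hn : 1 ≤ n) (x : ℝ) :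
    ∑ i ∈ Finset.range n, (p i).eval x ^ 2 =
      ((Polynomial.derivative (p n)).eval x * (p (n - 1)).eval x -
          (Polynomial.derivative (p (n - 1))).eval x * (p n).eval x) / a n := by
  induction n, hn using Nat.le_induction with
  | base =>
    have ha1 := ha 1 le_rfl
    simp only [Finset.sum_range_one, Nat.sub_self, h1, Polynomial.derivative_mul,
      Polynomial.derivative_add, Polynomial.derivative_mul, Polynomial.derivative_C,
      Polynomial.derivative_X, Polynomial.eval_mul, Polynomial.eval_add,
      Polynomial.eval_C, Polynomial.eval_X, zero_mul, mul_one, zero_add, add_zero]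
    field_simp
    ring
  | succ n hn ih =>
    have hrecn := hrec (n + 1) (by omega)
    have hcn := hc (n + 1) (by omega)
    have e1 : n + 1 - 1 = n := by omega
    rw [e1] at hrecn hcn
    have e2 : n + 1 - 2 = n - 1 := by omega
    rw [e2] at hrecn
    have hAn := ha n hn
    have hAn1 := ha (n + 1) (by omega)
    rw [Finset.sum_range_succ, ih, e1, hrecn, hcn]
    simp only [Polynomial.derivative_sub, Polynomial.derivative_mul,
      Polynomial.derivative_add, Polynomial.derivative_C, Polynomial.derivative_X,
      Polynomial.eval_sub, Polynomial.eval_mul, Polynomial.eval_add,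
      Polynomial.eval_C, Polynomial.eval_X, zero_mul, mul_one, zero_add, add_zero]
    field_simp
    ring
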